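/- Let n ≥ 1, let D ⊂ ℤⁿ be a finite nonempty set, and let S ⊂ ℤⁿ be a finite set. Then there exists a subset S' ⊆ S with |S'| ≥ |S| / |D|² such that the translates D + γ for γ ∈ S' are pairwise disjoint. -/
import Mathlib

lemma stmt0_aux (n : ℕ) (D : Finset (Fin n → ℤ)) (hD : D.Nonempty) :
    ∀ (k : ℕ) (S : Finset (Fin n → ℤ)), S.card ≤ k →
    ∃ S' ⊆ S, (S.card : ℝ) / ((D.card : ℝ) ^ 2) ≤ (S'.card : ℝ) ∧
      ∀ γ ∈ S', ∀ γ' ∈ S', γ ≠ γ' →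
        Disjoint (D.image (fun d => d + γ)) (D.image (fun d => d + γ')) := by
  have hDc : (0 : ℝ) < (D.card : ℝ) ^ 2 := by
    have := hD.card_pos
    positivity
  intro k
  induction k with
  | zero =>
    intro S hS
    refine ⟨∅, Finset.empty_subset _, ?_, by simp⟩
    have : S.card = 0 := Nat.le_zero.mp hS
    simp [this]
  | succ k ih =>
    intro S hS
    rcases S.eq_empty_or_nonempty with rfl | ⟨γ, hγ⟩
    · exact ⟨∅, Finset.empty_subset _, by simp, by simp⟩
    classical
    set T : Finset (Fin n → ℤ) :=
      S.filter (fun s => ¬ Disjoint (D.image (fun d => d + s)) (D.image (fun d => d + γ))) with hTdef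
    have hγT : γ ∈ T := by
      rw [hTdef, Finset.mem_filter]
      refine ⟨hγ, ?_⟩
      rw [Finset.disjoint_left]
      intro h
      obtain ⟨d, hd⟩ := hD
      exact h (Finset.mem_image_of_mem _ hd) (Finset.mem_image_of_mem _ hd)
    have hTcard : T.card ≤ D.card ^ 2 := by
      have hsub : T ⊆ (D ×ˢ D).image (fun p => p.2 - p.1 + γ) := by
        intro s hs
        rw [hTdef, Finset.mem_filter] at hs
        rw [Finset.not_disjoint_iff] at hs
        obtain ⟨x, hx1, hx2⟩ := hs.2
        simp only [Finset.mem_image] at hx1 hx2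
        obtain ⟨d, hd, hdx⟩ := hx1
        obtain ⟨d', hd', hd'x⟩ := hx2
        refine Finset.mem_image.mpr ⟨(d, d'), Finset.mk_mem_product hd hd', ?_⟩
        have : d + s = d' + γ := by rw [hdx, hd'x]
        simp only []
        have := congrArg (fun z => z - d) this
        simpa [sub_add_eq_add_sub, add_sub_cancel_left] using this.symm
      calc T.card ≤ ((D ×ˢ D).image (fun p => p.2 - p.1 + γ)).card := Finset.card_le_card hsub
        _ ≤ (D ×ˢ D).card := Finset.card_image_le
        _ = D.card ^ 2 := by rw [Finset.card_product, sq]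
    have hTsub : T ⊆ S := Finset.filter_subset _ _
    have hlt : (S \ T).card < S.card := by
      apply Finset.card_lt_card
      rw [Finset.ssubset_iff_of_subset (Finset.sdiff_subset)]
      exact ⟨γ, hγ, by simp [hγT]⟩
    obtain ⟨S'', hsub'', hcard'', hdisj''⟩ := ih (S \ T) (by omega)
    have hγnot : γ ∉ S'' := fun h => (Finset.mem_sdiff.mp (hsub'' h)).2 hγT
    refine ⟨insert γ S'', ?_, ?_, ?_⟩
    · intro x hx
      rcases Finset.mem_insert.mp hx with rfl | hx
      · exact hγ
      · exact (Finset.mem_sdiff.mp (hsub'' hx)).1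
    · rw [Finset.card_insert_of_notMem hγnot]
      have hsd : ((S \ T).card : ℝ) = (S.card : ℝ) - T.card := by
        rw [Finset.card_sdiff_of_subset hTsub]
        have := Finset.card_le_card hTsub
        push_cast [Nat.cast_sub this]
        ring
      have h1 : (S.card : ℝ) - (D.card : ℝ) ^ 2 ≤ ((S \ T).card : ℝ) := by
        rw [hsd]
        have : (T.card : ℝ) ≤ (D.card : ℝ) ^ 2 := by exact_mod_cast hTcard
        linarith
      rw [div_le_iff₀ hDc] at hcard'' ⊢
      push_cast
      nlinarith
    · intro a ha b hb hab
      rcases Finset.mem_insert.mp ha with ha2 | ha2 <;>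
        rcases Finset.mem_insert.mp hb with hb2 | hb2
      · exact absurd (ha2.trans hb2.symm) hab
      · have hbT : b ∉ T := (Finset.mem_sdiff.mp (hsub'' hb2)).2
        have hbS : b ∈ S := (Finset.mem_sdiff.mp (hsub'' hb2)).1
        rw [ha2]
        by_contra h
        exact hbT (Finset.mem_filter.mpr ⟨hbS, fun hd => h hd.symm⟩)
      · have haT : a ∉ T := (Finset.mem_sdiff.mp (hsub'' ha2)).2
        have haS : a ∈ S := (Finset.mem_sdiff.mp (hsub'' ha2)).1
        rw [hb2]
        by_contra h
        exact haT (Finset.mem_filter.mpr ⟨haS, h⟩)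
      · exact hdisj'' a ha2 b hb2 hab

/-- Given a finite nonempty `D ⊂ ℤⁿ` and a finite `S ⊂ ℤⁿ`, there is
`S' ⊆ S` with `|S'| ≥ |S|/|D|²` whose translates `D + γ`, `γ ∈ S'`, are pairwise disjoint. -/
theorem stmt0 (n : ℕ) (hn : 1 ≤ n) (D S : Finset (Fin n → ℤ)) (hD : D.Nonempty) :
    ∃ S' ⊆ S, (S.card : ℝ) / ((D.card : ℝ) ^ 2) ≤ (S'.card : ℝ) ∧
      ∀ γ ∈ S', ∀ γ' ∈ S', γ ≠ γ' →
        Disjoint (D.image (fun d => d + γ)) (D.image (fun d => d + γ')) := by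
  exact stmt0_aux n D hD S.card S le_rfl
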